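/- Fix 0 < p ≤ 1, L > 0, α ≥ 0, β ≥ 1, h > 0. Define C = (8L²h²β + 2β)/(1 - (1-p)(4L²h²α + 1)β). If β = 1 and h ≤ (1/(10L))√(p/(1+α)), then C ≥ 0 and 8h²(2L² + C(1-p)L²α) ≤ 1/4. -/

import Mathlib

set_option maxHeartbeats 1000000


/-- Step-size condition for the MARINA Lyapunov constant with `β = 1`: if
`h ≤ (1/(10L))√(p/(1+α))` then `C ≥ 0` and `8h²(2L² + C(1-p)L²α) ≤ 1/4`, where
`C = (8L²h²β + 2β)/(1 - (1-p)(4L²h²α + 1)β)`. -/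
theorem marina_stepsize_beta_one
    (p L α h : ℝ) (hp : 0 < p) (hp1 : p ≤ 1) (hL : 0 < L) (hα : 0 ≤ α) (hh : 0 < h)
    (hstep : h ≤ (1 / (10 * L)) * Real.sqrt (p / (1 + α))) :
    0 ≤ (8 * L ^ 2 * h ^ 2 * 1 + 2 * 1) / (1 - (1 - p) * (4 * L ^ 2 * h ^ 2 * α + 1) * 1) ∧
    8 * h ^ 2 * (2 * L ^ 2 +
        ((8 * L ^ 2 * h ^ 2 * 1 + 2 * 1) / (1 - (1 - p) * (4 * L ^ 2 * h ^ 2 * α + 1) * 1))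
          * (1 - p) * L ^ 2 * α) ≤ 1 / 4 := by
  have hA : (0:ℝ) < 1 + α := by linarith
  have hx : (0:ℝ) ≤ p / (1 + α) := by positivity
  have hsq : h ^ 2 ≤ (1 / (10 * L)) ^ 2 * (p / (1 + α)) := by
    have h2 := Real.sq_sqrt hx
    have hs0 := Real.sqrt_nonneg (p / (1 + α))
    nlinarith [hh.le, hstep]
  have key : 100 * (L ^ 2 * h ^ 2) * (1 + α) ≤ p := by
    have hmul : h ^ 2 * (100 * L ^ 2 * (1 + α)) ≤
        (1 / (10 * L)) ^ 2 * (p / (1 + α)) * (100 * L ^ 2 * (1 + α)) :=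
      mul_le_mul_of_nonneg_right hsq (by positivity)
    have heq : (1 / (10 * L)) ^ 2 * (p / (1 + α)) * (100 * L ^ 2 * (1 + α)) = p := by
      field_simp [hL.ne', hA.ne']
      ring_nf
    nlinarith [hmul]
  set s : ℝ := L ^ 2 * h ^ 2 with hs_def
  have hs0 : 0 ≤ s := by positivity
  have hsα : 100 * (s * α) ≤ p := by nlinarith
  have hs100 : 100 * s ≤ p := by nlinarith
  have hdeq : 1 - (1 - p) * (4 * L ^ 2 * h ^ 2 * α + 1) * 1 = p - 4 * (1 - p) * (s * α) := by
    rw [hs_def]; ring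
  have hD24 : (24 / 25) * p ≤ p - 4 * (1 - p) * (s * α) := by
    have h1 : 0 ≤ s * α := mul_nonneg hs0 hα
    nlinarith [mul_nonneg (mul_nonneg (sub_nonneg.2 hp1) hs0) hα]
  have hDpos : 0 < p - 4 * (1 - p) * (s * α) := by nlinarith
  have hnum : 0 ≤ 8 * L ^ 2 * h ^ 2 * 1 + 2 * 1 := by positivity
  constructor
  · rw [hdeq]
    exact div_nonneg hnum hDpos.le
  · have hC : (8 * L ^ 2 * h ^ 2 * 1 + 2 * 1) / (1 - (1 - p) * (4 * L ^ 2 * h ^ 2 * α + 1) * 1)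
        ≤ (8 * s + 2) / ((24 / 25) * p) := by
      rw [hdeq]
      have : (8 * L ^ 2 * h ^ 2 * 1 + 2 * 1) = 8 * s + 2 := by rw [hs_def]; ring
      rw [this]
      exact div_le_div_of_nonneg_left (by nlinarith) (by positivity) hD24
    set C := (8 * L ^ 2 * h ^ 2 * 1 + 2 * 1) / (1 - (1 - p) * (4 * L ^ 2 * h ^ 2 * α + 1) * 1)
      with hC_def
    have hC0 : 0 ≤ C := by rw [hC_def, hdeq]; exact div_nonneg hnum hDpos.le
    have hM : (8 * s + 2) / ((24 / 25) * p) * (24 * p) = 25 * (8 * s + 2) := by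
      field_simp
    set M := (8 * s + 2) / ((24 / 25) * p) with hM_def
    have hM0 : 0 ≤ M := by positivity
    have hmono : 8 * h ^ 2 * (2 * L ^ 2 + C * (1 - p) * L ^ 2 * α)
        ≤ 8 * h ^ 2 * (2 * L ^ 2 + M * (1 - p) * L ^ 2 * α) := by
      have h1 : 0 ≤ (1 - p) * L ^ 2 * α := by
        apply mul_nonneg (mul_nonneg (by linarith) (by positivity)) hα
      nlinarith [mul_le_mul_of_nonneg_right hC h1, sq_nonneg h]
    have hfin : 8 * h ^ 2 * (2 * L ^ 2 + M * (1 - p) * L ^ 2 * α) ≤ 1 / 4 := by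
      have hexp : 8 * h ^ 2 * (2 * L ^ 2 + M * (1 - p) * L ^ 2 * α)
          = 16 * s + 8 * (s * α) * (1 - p) * M := by rw [hs_def]; ring
      rw [hexp]
      have h24p : (0:ℝ) < 24 * p := by linarith
      have hpoly : 384 * p * s + 200 * (s * α) * (1 - p) * (8 * s + 2) ≤ 6 * p := by
        nlinarith [mul_nonneg (sub_nonneg.2 hs100) hp.le,
          mul_nonneg (sub_nonneg.2 hsα) (by linarith : (0:ℝ) ≤ 1 - p),
          mul_nonneg (mul_nonneg (by linarith : (0:ℝ) ≤ 1 - 100 * s)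
            (mul_nonneg hs0 hα)) (by linarith : (0:ℝ) ≤ 1 - p)]
      have hexp2 : (16 * s + 8 * (s * α) * (1 - p) * M) * (24 * p)
          = 384 * p * s + 200 * (s * α) * (1 - p) * (8 * s + 2) := by
        linear_combination (8 * (s * α) * (1 - p)) * hM
      have h6 : (1 / 4 : ℝ) * (24 * p) = 6 * p := by ring
      refine (mul_le_mul_iff_of_pos_right h24p).mp ?_
      rw [hexp2, h6]
      exact hpoly
    linarith
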